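/- Let {U_i}_{i∈I} be a family of subsets of X and {σ_i}_{i∈I} a compatible family of strategies (σ_i a strategy over M_{U_i}, with σ_i ∩ Hist(M_{U_i ∩ U_j}) = σ_j ∩ Hist(M_{U_i ∩ U_j}) for all i,j). Then the union σ' = ⋃_i σ_i is deterministic: if s ∪ {(x,o₁)} ∈ σ' and s ∪ {(x,o₂)} ∈ σ' with x ∉ dom(s), then o₁ = o₂. -/
import Mathlib


/-- A causal measurement scenario: a type of measurements `X`, outcome sets
`O x`, and an enabling relation from sets of events to measurements. -/
structure CMS (X Ω : Type*) where
  O : X → Set Ω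
  enab : Set (X × Ω) → X → Prop

namespace CMS

variable {X Ω : Type*}

/-- A set of events is consistent if it is the graph of a partial function. -/
def consistent (s : Set (X × Ω)) : Prop :=
  ∀ x o o', (x, o) ∈ s → (x, o') ∈ s → o = o'

/-- The domain of a set of events: the measurements performed. -/
def domain (s : Set (X × Ω)) : Set X := {x | ∃ o, (x, o) ∈ s}

/-- Accessibility: `x` may be performed after the events in `s`. -/
def acc (M : CMS X Ω) (s : Set (X × Ω)) (x : X) : Prop :=
  x ∉ domain s ∧ ∃ t ⊆ s, M.enab t x

/-- Histories: the least family containing `∅` and closed under adjoining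
an event `(x, o)` for accessible `x` and `o ∈ O x`. -/
inductive Hist (M : CMS X Ω) : Set (X × Ω) → Prop
  | empty : Hist M ∅
  | step {s : Set (X × Ω)} {x : X} {o : Ω} :
      Hist M s → M.acc s x → o ∈ M.O x → Hist M (s ∪ {(x, o)})

/-- A strategy for Nature: a (nonempty) downward-closed set of histories,
deterministic and total: unique outcome responses to accessible measurements. -/
structure IsStrategy (M : CMS X Ω) (σ : Set (Set (X × Ω))) : Prop where
  nonempty : σ.Nonempty
  hist : ∀ s ∈ σ, M.Hist s
  dc : ∀ s t : Set (X × Ω), M.Hist s → s ⊆ t → t ∈ σ → s ∈ σ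
  resp : ∀ s ∈ σ, ∀ x : X, M.acc s x →
    ∃! o : Ω, o ∈ M.O x ∧ s ∪ {(x, o)} ∈ σ

/-- The restriction `M_U` of a scenario to a subset `U` of measurements. -/
def restrict (M : CMS X Ω) (U : Set X) : CMS X Ω where
  O := M.O
  enab := fun s x => M.enab s x ∧ domain s ∪ {x} ⊆ U

end CMS

open CMS

namespace CMS

variable {X Ω : Type*}

lemma domain_union_single (s : Set (X × Ω)) (x : X) (o : Ω) :
    domain (s ∪ {(x, o)}) = domain s ∪ {x} := by
  ext y
  simp only [domain, Set.mem_setOf_eq, Set.mem_union, Set.mem_singleton_iff,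
    Prod.mk.injEq]
  constructor
  · rintro ⟨p, hp | ⟨rfl, rfl⟩⟩
    · exact Or.inl ⟨p, hp⟩
    · exact Or.inr rfl
  · rintro (⟨p, hp⟩ | rfl)
    · exact ⟨p, Or.inl hp⟩
    · exact ⟨o, Or.inr ⟨rfl, rfl⟩⟩

/-- Outcomes occurring in a history lie in the outcome sets. -/
lemma Hist.mem_O {M : CMS X Ω} {t : Set (X × Ω)} (h : M.Hist t) :
    ∀ x o, (x, o) ∈ t → o ∈ M.O x := by
  induction h with
  | empty => intro x o hxo; exact absurd hxo (Set.notMem_empty _)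
  | @step u y p _ _ hp ih =>
    intro x o hxo
    rcases hxo with hxo | hxo
    · exact ih x o hxo
    · rw [Set.mem_singleton_iff, Prod.mk.injEq] at hxo
      obtain ⟨rfl, rfl⟩ := hxo
      exact hp

/-- Histories of a restricted scenario have domain inside the restriction. -/
lemma Hist.domain_subset {M : CMS X Ω} {V : Set X} {t : Set (X × Ω)}
    (h : (M.restrict V).Hist t) : domain t ⊆ V := by
  induction h with
  | empty =>
    intro y hy; rcases hy with ⟨o, ho⟩; exact absurd ho (Set.notMem_empty _)
  | @step u y p _ hacc hp ih =>
    rw [domain_union_single]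
    rintro z (hz | hz)
    · exact ih hz
    · rcases hacc with ⟨_, tt, htt, _, hsub⟩
      exact hz ▸ hsub (Set.mem_union_right _ rfl)

/-- A history of one restriction is a history of any restriction containing
its domain. -/
lemma Hist.mono {M : CMS X Ω} {V W : Set X} {t : Set (X × Ω)}
    (h : (M.restrict V).Hist t) (hW : domain t ⊆ W) : (M.restrict W).Hist t := by
  induction h with
  | empty => exact Hist.empty
  | @step u y p hu hacc hp ih =>
    rw [domain_union_single] at hW
    have hdu : domain u ⊆ W := fun z hz => hW (Or.inl hz)
    have hyW : y ∈ W := hW (Or.inr rfl)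
    refine Hist.step (ih hdu) ?_ hp
    rcases hacc with ⟨hynd, tt, htt, henab, hsub⟩
    refine ⟨hynd, tt, htt, henab, ?_⟩
    rintro z (hz | hz)
    · rcases hz with ⟨o, ho⟩
      exact hdu ⟨o, htt ho⟩
    · exact hz ▸ hyW

/-- From a history containing `(x, o)`, extract a sub-history at which `x`
was accessible. -/
lemma Hist.extract {M : CMS X Ω} {t : Set (X × Ω)} (h : M.Hist t) :
    ∀ x o, (x, o) ∈ t → ∃ v, v ⊆ t ∧ M.Hist v ∧ M.acc v x := by
  induction h with
  | empty => intro x o hxo; exact absurd hxo (Set.notMem_empty _)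
  | @step u y p hu hacc hp ih =>
    intro x o hxo
    rcases hxo with hxo | hxo
    · obtain ⟨v, hv, hvh, hva⟩ := ih x o hxo
      exact ⟨v, hv.trans (Set.subset_union_left), hvh, hva⟩
    · rw [Set.mem_singleton_iff, Prod.mk.injEq] at hxo
      obtain ⟨rfl, rfl⟩ := hxo
      exact ⟨u, Set.subset_union_left, hu, hacc⟩

end CMS

/-- The union of a compatible family of strategies is deterministic. -/
theorem union_deterministic {X Ω : Type*} (M : CMS X Ω) {I : Type*}
    (U : I → Set X) (σ : I → Set (Set (X × Ω)))
    (hstrat : ∀ i, (M.restrict (U i)).IsStrategy (σ i))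
    (hcompat : ∀ i j, σ i ∩ {s | (M.restrict (U i ∩ U j)).Hist s} =
      σ j ∩ {s | (M.restrict (U i ∩ U j)).Hist s})
    (s : Set (X × Ω)) (x : X) (o₁ o₂ : Ω) (hx : x ∉ CMS.domain s)
    (h₁ : s ∪ {(x, o₁)} ∈ ⋃ i, σ i) (h₂ : s ∪ {(x, o₂)} ∈ ⋃ i, σ i) :
    o₁ = o₂ := by
  rw [Set.mem_iUnion] at h₁ h₂
  obtain ⟨i, h₁⟩ := h₁
  obtain ⟨j, h₂⟩ := h₂
  have hH1 := (hstrat i).hist _ h₁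
  have hH2 := (hstrat j).hist _ h₂
  have hd1 := domain_union_single s x o₁
  have hd2 := domain_union_single s x o₂
  have hsub1 : domain s ∪ {x} ⊆ U i := by rw [← hd1]; exact hH1.domain_subset
  have hsub2 : domain s ∪ {x} ⊆ U j := by rw [← hd2]; exact hH2.domain_subset
  have hH2i : (M.restrict (U i ∩ U j)).Hist (s ∪ {(x, o₂)}) :=
    hH2.mono (by rw [hd2]; exact Set.subset_inter hsub1 hsub2)
  have h₂i : s ∪ {(x, o₂)} ∈ σ i := by
    have hmem : s ∪ {(x, o₂)} ∈ σ j ∩ {s | (M.restrict (U i ∩ U j)).Hist s} :=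
      ⟨h₂, hH2i⟩
    rw [← hcompat i j] at hmem
    exact hmem.1
  have hH2' : (M.restrict (U i)).Hist (s ∪ {(x, o₂)}) :=
    hH2i.mono (by rw [hd2]; exact hsub1)
  obtain ⟨v, hv, hvh, hva⟩ := hH1.extract x o₁ (Set.mem_union_right _ rfl)
  have hvs : v ⊆ s := by
    intro p hp
    rcases hv hp with h | h
    · exact h
    · exact absurd (⟨o₁, h ▸ hp⟩ : x ∈ domain v) hva.1
  have hvσ : v ∈ σ i := (hstrat i).dc v _ hvh hv h₁
  have ho₁O : o₁ ∈ (M.restrict (U i)).O x :=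
    hH1.mem_O x o₁ (Set.mem_union_right _ rfl)
  have ho₂O : o₂ ∈ (M.restrict (U i)).O x :=
    hH2'.mem_O x o₂ (Set.mem_union_right _ rfl)
  have mem1 : v ∪ {(x, o₁)} ∈ σ i :=
    (hstrat i).dc _ _ (Hist.step hvh hva ho₁O)
      (Set.union_subset_union hvs (le_refl _)) h₁
  have mem2 : v ∪ {(x, o₂)} ∈ σ i :=
    (hstrat i).dc _ _ (Hist.step hvh hva ho₂O)
      (Set.union_subset_union hvs (le_refl _)) h₂i
  obtain ⟨o, _, huniq⟩ := (hstrat i).resp v hvσ x hva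
  exact (huniq o₁ ⟨ho₁O, mem1⟩).trans (huniq o₂ ⟨ho₂O, mem2⟩).symm
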